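/- (Irresponsibility of unbounded growth.) Let t₀ ∈ ℝ, w_* ∈ (0,1], and let i*, j* be positive integers. For each pair (i,j) ∈ {1,…,i*} × {1,…,j*} let w_{ij} : ℝ → ℝ be a continuous nonnegative function, set w(t) := Σ_{i,j} w_{ij}(t), and let v : ℝ → ℝ be continuous with w(t) ≥ w_*·v(t) for all t ≥ t₀. Let P : ℝ → ℝ be differentiable with P'(t) = v(t) − w(t) for all t ≥ t₀. If there exists a sequence (t_n) in [t₀, ∞) with P(t_n) → ∞, then there exists a pair (i,j) such that w_{ij} is not integrable on [t₀, ∞), i.e. ∫_{t₀}^{T} w_{ij} → ∞ as T → ∞. -/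

import Mathlib

open MeasureTheory

lemma tendsto_intervalIntegral_of_not_integrableOn
    (f : ℝ → ℝ) (hc : Continuous f) (hnn : ∀ t, 0 ≤ f t) (a : ℝ)
    (hni : ¬ IntegrableOn f (Set.Ici a)) :
    Filter.Tendsto (fun T => ∫ s in a..T, f s) Filter.atTop Filter.atTop := by
  have hmono : Monotone (fun T => ∫ s in a..T, f s) := by
    intro x y hxy
    have hadd : (∫ s in a..x, f s) + ∫ s in x..y, f s = ∫ s in a..y, f s :=
      intervalIntegral.integral_add_adjacent_intervals
        (hc.intervalIntegrable a x) (hc.intervalIntegrable x y)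
    have hge : 0 ≤ ∫ s in x..y, f s :=
      intervalIntegral.integral_nonneg hxy (fun t _ => hnn t)
    simp only
    linarith
  refine Filter.tendsto_atTop_atTop_of_monotone hmono ?_
  by_contra hb
  push_neg at hb
  obtain ⟨b, hbd⟩ := hb
  apply hni
  rw [integrableOn_Ici_iff_integrableOn_Ioi]
  apply MeasureTheory.integrableOn_Ioi_of_intervalIntegral_norm_bounded b a
    (fun i : ℝ => hc.integrableOn_Ioc) Filter.tendsto_id
  filter_upwards with i
  have : (∫ x in a..i, ‖f x‖) = ∫ x in a..i, f x := by
    congr 1; funext x; exact abs_of_nonneg (hnn x)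
  simp only [id]
  rw [this]
  exact (hbd i).le

/-- Irresponsibility of unbounded growth: if the mass-energy scale `P`, with
`P' = v − w` on `[t₀, ∞)` and total waste `w = ∑_{i,j} w_{ij}` satisfying
`w ≥ w_* · v` there, is unbounded along some sequence `(t_n)` in `[t₀, ∞)`,
then some individual waste flow `w_{ij}` is not integrable on `[t₀, ∞)`:
its integral `∫_{t₀}^{T} w_{ij}` tends to infinity as `T → ∞`. -/
theorem unbounded_growth_irresponsible (t₀ : ℝ) (wstar : ℝ)
    (h0 : 0 < wstar) (h1 : wstar ≤ 1)
    (istar jstar : ℕ) (histar : 0 < istar) (hjstar : 0 < jstar)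
    (wij : Fin istar → Fin jstar → ℝ → ℝ)
    (hwij_cont : ∀ i j, Continuous (wij i j))
    (hwij_nonneg : ∀ i j t, 0 ≤ wij i j t)
    (w : ℝ → ℝ) (hw_def : ∀ t, w t = ∑ i, ∑ j, wij i j t)
    (v : ℝ → ℝ) (hv_cont : Continuous v)
    (hw_ge : ∀ t, t₀ ≤ t → w t ≥ wstar * v t)
    (P : ℝ → ℝ) (hP : Differentiable ℝ P)
    (hP' : ∀ t, t₀ ≤ t → deriv P t = v t - w t)
    (tn : ℕ → ℝ) (htn : ∀ n, t₀ ≤ tn n)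
    (hPtn : Filter.Tendsto (fun n => P (tn n)) Filter.atTop Filter.atTop) :
    ∃ i : Fin istar, ∃ j : Fin jstar,
      ¬ IntegrableOn (wij i j) (Set.Ici t₀) ∧
      Filter.Tendsto (fun T => ∫ s in t₀..T, wij i j s)
        Filter.atTop Filter.atTop := by
  have hw_cont : Continuous w := by
    have : w = fun t => ∑ i, ∑ j, wij i j t := funext hw_def
    rw [this]
    exact continuous_finset_sum _ fun i _ =>
      continuous_finset_sum _ fun j _ => hwij_cont i j
  have hw_nonneg : ∀ t, 0 ≤ w t := by
    intro t
    rw [hw_def]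
    exact Finset.sum_nonneg fun i _ => Finset.sum_nonneg fun j _ => hwij_nonneg i j t
  -- Step 1: some wij is not integrable on Ici t₀
  have key : ∃ i : Fin istar, ∃ j : Fin jstar, ¬ IntegrableOn (wij i j) (Set.Ici t₀) := by
    by_contra hall
    push_neg at hall
    have hw_int : IntegrableOn w (Set.Ici t₀) := by
      have : IntegrableOn (fun t => ∑ i, ∑ j, wij i j t) (Set.Ici t₀) :=
        integrable_finset_sum _ fun i _ =>
          integrable_finset_sum _ fun j _ => hall i j
      exact this.congr_fun (fun t _ => (hw_def t).symm) measurableSet_Ici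
    set M : ℝ := ∫ x in Set.Ici t₀, w x with hM
    have hbound : ∀ T, t₀ ≤ T → ∫ s in t₀..T, w s ≤ M := by
      intro T hT
      rw [intervalIntegral.integral_of_le hT]
      apply setIntegral_mono_set hw_int
      · filter_upwards with x using hw_nonneg x
      · filter_upwards with x hx using Set.Ioc_subset_Ioi_self.trans Set.Ioi_subset_Ici_self hx
    have hPbound : ∀ T, t₀ ≤ T → P T ≤ P t₀ + (1 / wstar - 1) * M := by
      intro T hT
      have hftc : ∫ s in t₀..T, (v s - w s) = P T - P t₀ := by
        apply intervalIntegral.integral_eq_sub_of_hasDerivAt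
        · intro t ht
          rw [Set.uIcc_of_le hT] at ht
          have := (hP t).hasDerivAt
          rwa [hP' t ht.1] at this
        · exact (hv_cont.sub hw_cont).intervalIntegrable _ _
      have hmono : ∫ s in t₀..T, (v s - w s) ≤ ∫ s in t₀..T, (1 / wstar - 1) * w s := by
        apply intervalIntegral.integral_mono_on hT
          ((hv_cont.sub hw_cont).intervalIntegrable _ _)
          ((continuous_const.mul hw_cont).intervalIntegrable _ _)
        intro x hx
        have h1 : wstar * v x ≤ w x := hw_ge x hx.1
        have h2 : v x ≤ w x / wstar := by
          rw [le_div_iff₀ h0]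
          linarith [h1]
        have : w x / wstar = (1 / wstar) * w x := by ring
        show v x - w x ≤ (1 / wstar - 1) * w x
        nlinarith [this]
      have hcm : ∫ s in t₀..T, (1 / wstar - 1) * w s
          = (1 / wstar - 1) * ∫ s in t₀..T, w s := by
        simp [intervalIntegral.integral_const_mul]
      have hcoef : 0 ≤ 1 / wstar - 1 := by
        have : 1 ≤ 1 / wstar := by rw [le_div_iff₀ h0]; linarith
        linarith
      have hwle : ∫ s in t₀..T, w s ≤ M := hbound T hT
      have : (1 / wstar - 1) * ∫ s in t₀..T, w s ≤ (1 / wstar - 1) * M :=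
        mul_le_mul_of_nonneg_left hwle hcoef
      linarith [hftc, hmono, hcm, this]
    obtain ⟨n, hn⟩ :=
      (hPtn.eventually (Filter.eventually_gt_atTop (P t₀ + (1 / wstar - 1) * M))).exists
    exact absurd (hPbound (tn n) (htn n)) (not_le.mpr hn)
  obtain ⟨i, j, hij⟩ := key
  exact ⟨i, j, hij, tendsto_intervalIntegral_of_not_integrableOn _
    (hwij_cont i j) (hwij_nonneg i j) t₀ hij⟩
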